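/- (Lemma 3.1, second-moment bound.) Let d, d₁ ∈ ℕ and let b : ℝ^d × [0,1] → ℝ^d and σ : ℝ^d × [0,1] → ℝ^{d×d₁} satisfy, for some K₀, |φ(y₁,t₁) − φ(y₂,t₂)| ≤ K₀(|y₁ − y₂| + |t₁ − t₂|^{1/2}) for φ = b, σ. Fix C ≥ 1 and y ∈ ℝ^d. For each h ∈ (0,1], let (ℱ_n^h)_{n ≥ 0} be a discrete filtration on a probability space, (Y_n^h)_{n ≥ 0} an adapted ℝ^d-valued process with Y_0^h = y, and (Δt_n^h)_{n ≥ 0} nonnegative random variables with Δt_n^h being ℱ_n^h-measurable and h/C ≤ Δt_n^h ≤ C·h almost surely (quasi-uniform steps); set t_n^h = Σ_{i<n} Δt_i^h and assume t_N^h = 1 for the last index N. Assume the generalized local consistency: almost surely, |E[ΔY_n^h | ℱ_n^h] − Δt_n^h · b(Y_n^h, t_n^h)| ≤ C·h·Δt_n^h, and every entry of the conditional covariance matrix Cov(ΔY_n^h | ℱ_n^h) differs from the corresponding entry of Δt_n^h · (σσᵀ)(Y_n^h, t_n^h) by at most C·h·Δt_n^h, where ΔY_n^h = Y_{n+1}^h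 − Y_n^h. Define the piecewise constant interpolation Y^h(t) = Y_{z^h(t)}^h, where z^h(t) = max{ n ≥ 0 : t_n^h ≤ t }. Then there exists a constant K, depending only on K₀, C, d, d₁ and |y| (and not on h or t), such that E[ |Y^h(t)|² ] ≤ K for all t ∈ [0,1] and all h ∈ (0,1]. -/

import Mathlib

open Set MeasureTheory Filter Finset

/-- The (random) grid time `t_n = ∑_{i<n} Δt_i`. -/
noncomputable def gridTime {Ω : Type*} (Δt : ℕ → Ω → ℝ) (n : ℕ) (ω : Ω) : ℝ :=
  ∑ i ∈ Finset.range n, Δt i ω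

/-- The index `z(t) = max{ n ≥ 0 : t_n ≤ t }` of the piecewise constant
interpolation. -/
noncomputable def zIdx {Ω : Type*} (Δt : ℕ → Ω → ℝ) (t : ℝ) (ω : Ω) : ℕ :=
  sSup {n : ℕ | gridTime Δt n ω ≤ t}

namespace SMAux

section PureGrid

variable {Ω : Type*} {Δ : ℕ → Ω → ℝ} {ω : Ω} {t c : ℝ}

lemma gridTime_succ (Δ : ℕ → Ω → ℝ) (n : ℕ) (ω : Ω) :
    gridTime Δ (n + 1) ω = gridTime Δ n ω + Δ n ω :=
  Finset.sum_range_succ _ _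

lemma gridTime_zero (Δ : ℕ → Ω → ℝ) (ω : Ω) : gridTime Δ 0 ω = 0 :=
  Finset.sum_range_zero _

lemma gridTime_nonneg (hΔ : ∀ i, 0 ≤ Δ i ω) (n : ℕ) : 0 ≤ gridTime Δ n ω :=
  Finset.sum_nonneg fun i _ => hΔ i

lemma gridTime_mono (hΔ : ∀ i, 0 ≤ Δ i ω) : Monotone fun n => gridTime Δ n ω := by
  intro a b hab
  exact Finset.sum_le_sum_of_subset_of_nonneg (Finset.range_subset_range.mpr hab)
    (fun i _ _ => hΔ i)

lemma gridTime_lower (hΔ : ∀ i, c ≤ Δ i ω) (n : ℕ) : (n : ℝ) * c ≤ gridTime Δ n ω := by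
  calc (n : ℝ) * c = ∑ _i ∈ Finset.range n, c := by
        rw [Finset.sum_const, Finset.card_range, nsmul_eq_mul]
    _ ≤ _ := Finset.sum_le_sum fun i _ => hΔ i

lemma zIdx_set_nonempty (ht0 : 0 ≤ t) : {n : ℕ | gridTime Δ n ω ≤ t}.Nonempty :=
  ⟨0, by simpa [gridTime_zero] using ht0⟩

lemma zIdx_set_bddAbove (hc : 0 < c) (hΔ : ∀ i, c ≤ Δ i ω) :
    BddAbove {n : ℕ | gridTime Δ n ω ≤ t} := by
  refine ⟨Nat.ceil (t / c), fun n hn => ?_⟩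
  have h1 : (n : ℝ) * c ≤ t := (gridTime_lower hΔ n).trans hn
  have h2 : (n : ℝ) ≤ t / c := (le_div_iff₀ hc).mpr h1
  have h3 : (n : ℝ) ≤ (Nat.ceil (t / c) : ℝ) := h2.trans (Nat.le_ceil _)
  exact_mod_cast h3

lemma zIdx_lt_iff (hc : 0 < c) (hΔ : ∀ i, c ≤ Δ i ω) (ht0 : 0 ≤ t) (n : ℕ) :
    n < zIdx Δ t ω ↔ gridTime Δ (n + 1) ω ≤ t := by
  have hΔ0 : ∀ i, 0 ≤ Δ i ω := fun i => hc.le.trans (hΔ i)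
  constructor
  · intro hlt
    have hmem : zIdx Δ t ω ∈ {n : ℕ | gridTime Δ n ω ≤ t} :=
      Nat.sSup_mem (zIdx_set_nonempty ht0) (zIdx_set_bddAbove hc hΔ)
    exact (gridTime_mono hΔ0 (Nat.succ_le_of_lt hlt)).trans hmem
  · intro hle
    exact Nat.lt_of_succ_le (le_csSup (zIdx_set_bddAbove hc hΔ) hle)

lemma gridTime_zIdx_le (hc : 0 < c) (hΔ : ∀ i, c ≤ Δ i ω) (ht0 : 0 ≤ t) :
    gridTime Δ (zIdx Δ t ω) ω ≤ t :=
  Nat.sSup_mem (zIdx_set_nonempty ht0) (zIdx_set_bddAbove hc hΔ)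

end PureGrid

section OneSpace
variable {Ω : Type*} [mΩ : MeasurableSpace Ω] {P : Measure Ω}

lemma integrable_pi_apply {d : ℕ} {f : Ω → (Fin d → ℝ)} (hf : Integrable f P) (k : Fin d) :
    Integrable (fun ω => f ω k) P := by
  have := (ContinuousLinearMap.proj (R := ℝ) (φ := fun _ : Fin d => ℝ) k).integrable_comp hf
  simpa using this

lemma integral_pi_apply {d : ℕ} {f : Ω → (Fin d → ℝ)} (hf : Integrable f P) (k : Fin d) :
    ∫ ω, f ω k ∂P = (∫ ω, f ω ∂P) k := by
  have := (ContinuousLinearMap.proj (R := ℝ) (φ := fun _ : Fin d => ℝ) k).integral_comp_comm hf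
  simpa using this

lemma memℒp_pi_apply {d : ℕ} {f : Ω → (Fin d → ℝ)} (hf : MemLp f 2 P) (k : Fin d) :
    MemLp (fun ω => f ω k) 2 P := by
  have := (ContinuousLinearMap.proj (R := ℝ) (φ := fun _ : Fin d => ℝ) k).comp_memLp' hf
  exact this

lemma sq_norm_le_sum_sq {d : ℕ} (x : Fin d → ℝ) : ‖x‖ ^ 2 ≤ ∑ k, (x k) ^ 2 := by
  have hs : 0 ≤ ∑ k, (x k) ^ 2 := Finset.sum_nonneg fun k _ => sq_nonneg _
  have hb : ‖x‖ ≤ Real.sqrt (∑ k, (x k) ^ 2) := by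
    refine (pi_norm_le_iff_of_nonneg (Real.sqrt_nonneg _)).mpr fun i => ?_
    rw [Real.norm_eq_abs]
    refine Real.abs_le_sqrt ?_
    exact Finset.single_le_sum (f := fun k => (x k) ^ 2) (fun k _ => sq_nonneg _)
      (Finset.mem_univ i)
  calc ‖x‖ ^ 2 ≤ Real.sqrt (∑ k, (x k) ^ 2) ^ 2 :=
        pow_le_pow_left₀ (norm_nonneg _) hb 2
    _ = ∑ k, (x k) ^ 2 := Real.sq_sqrt hs

end OneSpace

section TwoSpace
variable {Ω : Type*} {m : MeasurableSpace Ω} [mΩ : MeasurableSpace Ω] {P : Measure Ω}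
  [IsProbabilityMeasure P]

omit [IsProbabilityMeasure P] in
lemma integrable_mul₂ {f g : Ω → ℝ} (hf : MemLp f 2 P) (hg : MemLp g 2 P) :
    Integrable (fun ω => f ω * g ω) P := by
  have h : MemLp (f • g) 1 P := by
    haveI : ENNReal.HolderTriple 2 2 1 := ⟨by rw [inv_one]; exact ENNReal.inv_two_add_inv_two⟩
    exact MemLp.smul (φ := f) hg hf
  have := memLp_one_iff_integrable.mp h
  exact this

lemma memℒp_two_condexp (hm : m ≤ mΩ) {f : Ω → ℝ} (hf : MemLp f 2 P) :
    MemLp (P[f|m]) 2 P := by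
  haveI : SigmaFinite (P.trim hm) := inferInstance
  set g : Ω → ℝ := ⇑(condExpL2 ℝ ℝ hm (hf.toLp f) : Lp ℝ 2 P) with hg
  have hmemg : MemLp g 2 P := Lp.memLp _
  have hae : g =ᵐ[P] P[f|m] := by
    refine ae_eq_condExp_of_forall_setIntegral_eq hm (hf.integrable one_le_two)
      (fun s _ _ => (hmemg.integrable one_le_two).integrableOn)
      (fun s hs hμs => ?_) ?_
    · rw [integral_condExpL2_eq hm (hf.toLp f) hs hμs.ne]
      exact setIntegral_congr_ae (hm s hs) (hf.coeFn_toLp.mono fun ω hω _ => hω)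
    · exact aestronglyMeasurable_condExpL2 hm _
  exact hmemg.ae_eq hae

lemma condexp_pi_apply (hm : m ≤ mΩ) {d : ℕ} {f : Ω → (Fin d → ℝ)}
    (hf : Integrable f P) (k : Fin d) :
    (fun ω => (P[f|m]) ω k) =ᵐ[P] P[(fun ω => f ω k)|m] := by
  haveI : SigmaFinite (P.trim hm) := inferInstance
  have hfk : Integrable (fun ω => f ω k) P := integrable_pi_apply hf k
  refine ae_eq_condExp_of_forall_setIntegral_eq hm hfk
    (fun s _ _ => (integrable_pi_apply integrable_condExp k).integrableOn)
    (fun s hs hμs => ?_) ?_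
  · rw [integral_pi_apply integrable_condExp.integrableOn k,
      integral_pi_apply hf.integrableOn k, setIntegral_condExp hm hf hs]
  · exact StronglyMeasurable.aestronglyMeasurable
      ((continuous_apply k).comp_stronglyMeasurable stronglyMeasurable_condExp)

lemma setIntegral_mul_condexp (hm : m ≤ mΩ) {f g : Ω → ℝ}
    (hgm : StronglyMeasurable[m] g) (hg : MemLp g 2 P) (hf : MemLp f 2 P)
    {A : Set Ω} (hA : MeasurableSet[m] A) :
    ∫ ω in A, g ω * f ω ∂P = ∫ ω in A, g ω * (P[f|m]) ω ∂P := by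
  haveI : SigmaFinite (P.trim hm) := inferInstance
  have hgf : Integrable (fun ω => g ω * f ω) P := integrable_mul₂ hg hf
  have hfi : Integrable f P := hf.integrable one_le_two
  have h1 : ∫ ω in A, g ω * f ω ∂P = ∫ ω in A, (P[(fun ω => g ω * f ω)|m]) ω ∂P :=
    (setIntegral_condExp hm hgf hA).symm
  have h2 : P[(fun ω => g ω * f ω)|m] =ᵐ[P] fun ω => g ω * (P[f|m]) ω := by
    have := condExp_mul_of_stronglyMeasurable_left (μ := P) hgm
      (by exact hgf : Integrable (g * f) P) hfi
    exact this
  rw [h1]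
  exact setIntegral_congr_ae (hm A hA) (h2.mono fun ω hω _ => hω)

lemma step_identity (hm : m ≤ mΩ) {d : ℕ} {Yn Yn1 : Ω → Fin d → ℝ}
    (hYn : MemLp Yn 2 P) (hYn1 : MemLp Yn1 2 P)
    (hYnm : StronglyMeasurable[m] Yn)
    {A : Set Ω} (hA : MeasurableSet[m] A) (k : Fin d) :
    ∫ ω in A, (Yn1 ω k)^2 ∂P
      = ∫ ω in A, (Yn ω k + (P[(fun ω' => Yn1 ω' - Yn ω')|m]) ω k)^2 ∂P
        + ∫ ω in A, (P[(fun ω' =>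
            (Yn1 ω' k - Yn ω' k - (P[(fun ω'' => Yn1 ω'' - Yn ω'')|m]) ω' k) *
            (Yn1 ω' k - Yn ω' k - (P[(fun ω'' => Yn1 ω'' - Yn ω'')|m]) ω' k))|m]) ω ∂P := by
  haveI : SigmaFinite (P.trim hm) := inferInstance
  set M : Ω → Fin d → ℝ := P[(fun ω' => Yn1 ω' - Yn ω')|m] with hM
  set Xk : Ω → ℝ := fun ω => Yn ω k with hXk
  set Dk : Ω → ℝ := fun ω => Yn1 ω k - Yn ω k with hDk
  set Mk : Ω → ℝ := fun ω => M ω k with hMkdef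
  have hD2 : MemLp (fun ω => Yn1 ω - Yn ω) 2 P := hYn1.sub hYn
  have hDk2 : MemLp Dk 2 P := by
    have := memℒp_pi_apply hD2 k; simpa [Pi.sub_apply] using this
  have hXk2 : MemLp Xk 2 P := memℒp_pi_apply hYn k
  have hXkm : StronglyMeasurable[m] Xk :=
    (continuous_apply k).comp_stronglyMeasurable hYnm
  have hMk_eq : Mk =ᵐ[P] P[Dk|m] := condexp_pi_apply hm (hD2.integrable one_le_two) k
  have hcondDk2 : MemLp (P[Dk|m]) 2 P := memℒp_two_condexp hm hDk2
  have hMk2 : MemLp Mk 2 P := hcondDk2.ae_eq hMk_eq.symm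
  have hIxx : IntegrableOn (fun ω => Xk ω * Xk ω) A P := (integrable_mul₂ hXk2 hXk2).integrableOn
  have hIxd : IntegrableOn (fun ω => Xk ω * Dk ω) A P := (integrable_mul₂ hXk2 hDk2).integrableOn
  have hIdd : IntegrableOn (fun ω => Dk ω * Dk ω) A P := (integrable_mul₂ hDk2 hDk2).integrableOn
  have hIxm : IntegrableOn (fun ω => Xk ω * Mk ω) A P := (integrable_mul₂ hXk2 hMk2).integrableOn
  have hImm : IntegrableOn (fun ω => Mk ω * Mk ω) A P := (integrable_mul₂ hMk2 hMk2).integrableOn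
  have hIdm : IntegrableOn (fun ω => Dk ω * Mk ω) A P := (integrable_mul₂ hDk2 hMk2).integrableOn
  have E1 : ∫ ω in A, Xk ω * Dk ω ∂P = ∫ ω in A, Xk ω * Mk ω ∂P := by
    rw [setIntegral_mul_condexp hm hXkm hXk2 hDk2 hA]
    refine setIntegral_congr_ae (hm A hA) ?_
    filter_upwards [hMk_eq] with ω hω _
    rw [hω]
  have E2 : ∫ ω in A, Dk ω * Mk ω ∂P = ∫ ω in A, Mk ω * Mk ω ∂P := by
    have h := setIntegral_mul_condexp hm (stronglyMeasurable_condExp (f := Dk)) hcondDk2 hDk2 hA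
    calc ∫ ω in A, Dk ω * Mk ω ∂P
        = ∫ ω in A, (P[Dk|m]) ω * Dk ω ∂P := by
          refine setIntegral_congr_ae (hm A hA) ?_
          filter_upwards [hMk_eq] with ω hω _
          rw [hω, mul_comm]
      _ = ∫ ω in A, (P[Dk|m]) ω * (P[Dk|m]) ω ∂P := h
      _ = ∫ ω in A, Mk ω * Mk ω ∂P := by
          refine setIntegral_congr_ae (hm A hA) ?_
          filter_upwards [hMk_eq] with ω hω _
          rw [hω]
  set W : Ω → ℝ := fun ω => (Dk ω - Mk ω) * (Dk ω - Mk ω) with hW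
  have hDM2 : MemLp (fun ω => Dk ω - Mk ω) 2 P := hDk2.sub hMk2
  have hWint : Integrable W P := integrable_mul₂ hDM2 hDM2
  have E3 : ∫ ω in A, (P[W|m]) ω ∂P = ∫ ω in A, W ω ∂P := setIntegral_condExp hm hWint hA
  have E4 : ∫ ω in A, W ω ∂P
      = ∫ ω in A, Dk ω * Dk ω ∂P - 2 * ∫ ω in A, Dk ω * Mk ω ∂P + ∫ ω in A, Mk ω * Mk ω ∂P := by
    have hptw : ∀ ω, W ω = Dk ω * Dk ω - 2 * (Dk ω * Mk ω) + Mk ω * Mk ω := fun ω => by ring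
    have hI1 : IntegrableOn (fun ω => Dk ω * Dk ω - 2 * (Dk ω * Mk ω)) A P :=
      hIdd.sub (hIdm.const_mul 2)
    rw [integral_congr_ae (Eventually.of_forall fun ω => hptw ω), integral_add hI1 hImm,
      integral_sub hIdd (hIdm.const_mul 2), integral_const_mul 2 _]
  have LHS : ∫ ω in A, (Yn1 ω k)^2 ∂P
      = ∫ ω in A, Xk ω * Xk ω ∂P + 2 * ∫ ω in A, Xk ω * Dk ω ∂P + ∫ ω in A, Dk ω * Dk ω ∂P := by
    have hptw : ∀ ω, (Yn1 ω k)^2 = Xk ω * Xk ω + 2 * (Xk ω * Dk ω) + Dk ω * Dk ω := fun ω => by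
      simp only [hXk, hDk]; ring
    have hI1 : IntegrableOn (fun ω => Xk ω * Xk ω + 2 * (Xk ω * Dk ω)) A P :=
      hIxx.add (hIxd.const_mul 2)
    rw [integral_congr_ae (Eventually.of_forall fun ω => hptw ω), integral_add hI1 hIdd,
      integral_add hIxx (hIxd.const_mul 2), integral_const_mul 2 _]
  have RHS1 : ∫ ω in A, (Yn ω k + M ω k)^2 ∂P
      = ∫ ω in A, Xk ω * Xk ω ∂P + 2 * ∫ ω in A, Xk ω * Mk ω ∂P + ∫ ω in A, Mk ω * Mk ω ∂P := by
    have hptw : ∀ ω, (Yn ω k + M ω k)^2 = Xk ω * Xk ω + 2 * (Xk ω * Mk ω) + Mk ω * Mk ω :=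
      fun ω => by simp only [hXk, hMkdef]; ring
    have hI1 : IntegrableOn (fun ω => Xk ω * Xk ω + 2 * (Xk ω * Mk ω)) A P :=
      hIxx.add (hIxm.const_mul 2)
    rw [integral_congr_ae (Eventually.of_forall fun ω => hptw ω), integral_add hI1 hImm,
      integral_add hIxx (hIxm.const_mul 2), integral_const_mul 2 _]
  rw [LHS, RHS1, E3, E4, E1, E2]
  ring

end TwoSpace
end SMAux

set_option maxHeartbeats 8000000 in
/-- Lemma 3.1, second-moment bound: under Lipschitz/Hölder-1/2 regularity of
the coefficients, quasi-uniform predictable steps and generalized local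
consistency, the piecewise constant interpolation `Y^h(t) = Y_{z^h(t)}^h`
satisfies `E[ |Y^h(t)|² ] ≤ K` for all `t ∈ [0,1]`, `h ∈ (0,1]`, with `K`
independent of `h` and `t`. -/
theorem secondMoment_bound
    (d d1 : ℕ) (K0 C : ℝ) (hC : 1 ≤ C)
    (b : (Fin d → ℝ) → ℝ → (Fin d → ℝ))
    (σ : (Fin d → ℝ) → ℝ → (Fin d → Fin d1 → ℝ))
    (hb : ∀ (y1 y2 : Fin d → ℝ) (t1 t2 : ℝ),
      ‖b y1 t1 - b y2 t2‖ ≤ K0 * (‖y1 - y2‖ + |t1 - t2| ^ ((1:ℝ)/2)))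
    (hσ : ∀ (y1 y2 : Fin d → ℝ) (t1 t2 : ℝ),
      ‖σ y1 t1 - σ y2 t2‖ ≤ K0 * (‖y1 - y2‖ + |t1 - t2| ^ ((1:ℝ)/2)))
    (y : Fin d → ℝ)
    {Ω : Type*} [mΩ : MeasurableSpace Ω] (P : Measure Ω) [IsProbabilityMeasure P]
    (F : ℝ → ℕ → MeasurableSpace Ω)
    (Y : ℝ → ℕ → Ω → (Fin d → ℝ))
    (Δt : ℝ → ℕ → Ω → ℝ)
    -- `(ℱ_n^h)` is a discrete filtration:
    (hfilt : ∀ h ∈ Set.Ioc (0:ℝ) 1, Monotone (F h) ∧ ∀ n, F h n ≤ mΩ)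
    -- `(Y_n^h)` is adapted, square integrable, and starts at `y`:
    (hadapt : ∀ h ∈ Set.Ioc (0:ℝ) 1, ∀ n, Measurable[F h n] (Y h n))
    (hL2 : ∀ h ∈ Set.Ioc (0:ℝ) 1, ∀ n, MemLp (Y h n) 2 P)
    (hY0 : ∀ h ∈ Set.Ioc (0:ℝ) 1, ∀ ω, Y h 0 ω = y)
    -- predictable quasi-uniform steps `h/C ≤ Δt_n^h ≤ C·h`:
    (hstepmeas : ∀ h ∈ Set.Ioc (0:ℝ) 1, ∀ n, Measurable[F h n] (Δt h n))
    (hstep : ∀ h ∈ Set.Ioc (0:ℝ) 1, ∀ n, ∀ᵐ ω ∂P,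
      h / C ≤ Δt h n ω ∧ Δt h n ω ≤ C * h)
    -- the grid reaches time `1` at the last index `N`:
    (hterm : ∀ h ∈ Set.Ioc (0:ℝ) 1, ∃ N : ℕ, ∀ᵐ ω ∂P, gridTime (Δt h) N ω = 1)
    -- generalized local consistency, drift part (LC1):
    (hdrift : ∀ h ∈ Set.Ioc (0:ℝ) 1, ∀ n, ∀ᵐ ω ∂P,
      ‖(P[(fun ω' => Y h (n+1) ω' - Y h n ω') | F h n]) ω
        - Δt h n ω • b (Y h n ω) (gridTime (Δt h) n ω)‖ ≤ C * h * Δt h n ω)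
    -- generalized local consistency, covariance part (LC2), entrywise:
    (hcov : ∀ h ∈ Set.Ioc (0:ℝ) 1, ∀ n, ∀ k l : Fin d, ∀ᵐ ω ∂P,
      |(P[(fun ω' =>
            (Y h (n+1) ω' k - Y h n ω' k
              - (P[(fun ω'' => Y h (n+1) ω'' - Y h n ω'') | F h n]) ω' k) *
            (Y h (n+1) ω' l - Y h n ω' l
              - (P[(fun ω'' => Y h (n+1) ω'' - Y h n ω'') | F h n]) ω' l))
          | F h n]) ω
        - Δt h n ω * (∑ j, σ (Y h n ω) (gridTime (Δt h) n ω) k j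
              * σ (Y h n ω) (gridTime (Δt h) n ω) l j)|
        ≤ C * h * Δt h n ω) :
    ∃ K : ℝ, ∀ h ∈ Set.Ioc (0:ℝ) 1, ∀ t ∈ Set.Icc (0:ℝ) 1,
      (∫ ω, ‖Y h (zIdx (Δt h) t ω) ω‖ ^ 2 ∂P) ≤ K := by
  have hC0 : (0:ℝ) < C := lt_of_lt_of_le one_pos hC
  have hK0 : 0 ≤ K0 := by
    have h1 := hb 0 0 1 0
    have h2 : |(1:ℝ) - 0| ^ ((1:ℝ)/2) = 1 := by norm_num
    rw [h2] at h1
    have h3 : (0:ℝ) ≤ ‖b 0 1 - b 0 0‖ := norm_nonneg _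
    simp only [sub_self, norm_zero, zero_add] at h1
    linarith
  set β : ℝ := ‖b y 0‖ + K0 * (‖y‖ + 1) + K0 with hβdef
  set s2 : ℝ := ‖σ y 0‖ + K0 * (‖y‖ + 1) + K0 with hs2def
  have hβ0 : 0 ≤ β := by positivity
  have hs20 : 0 ≤ s2 := by positivity
  set γ : ℝ := C * (β + C) with hγdef
  have hγ0 : 0 ≤ γ := by positivity
  set c5 : ℝ := 4*(d:ℝ)*γ + 2*(d:ℝ)*γ^2 + 2*(d:ℝ)*(d1:ℝ)*C*s2^2 + (d:ℝ)*C^2 with hc5def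
  have hc50 : 0 ≤ c5 := by positivity
  set K : ℝ := (∑ k, (y k)^2 + 1) * Real.exp (c5 * C) with hKdef
  have hSy0 : 0 ≤ ∑ k, (y k)^2 := Finset.sum_nonneg fun k _ => sq_nonneg _
  have hKpos : 0 ≤ K := by positivity
  -- uniform coefficient bounds
  have hbB : ∀ (v : Fin d → ℝ) (s : ℝ), 0 ≤ s → s ≤ 1 → ‖b v s‖ ≤ β * (1 + ‖v‖) := by
    intro v s hs0 hs1
    have h1 := hb v y s 0
    have h2 : |s - 0| ^ ((1:ℝ)/2) ≤ 1 := by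
      rw [sub_zero, abs_of_nonneg hs0]
      exact Real.rpow_le_one hs0 hs1 (by norm_num)
    have h5 : (0:ℝ) ≤ |s - 0| ^ ((1:ℝ)/2) := Real.rpow_nonneg (abs_nonneg _) _
    have h3 : ‖v - y‖ ≤ ‖v‖ + ‖y‖ := norm_sub_le v y
    have h4 : ‖b v s‖ ≤ ‖b v s - b y 0‖ + ‖b y 0‖ := by
      simpa using norm_add_le (b v s - b y 0) (b y 0)
    have h6 : 0 ≤ ‖v‖ := norm_nonneg v
    have h7 : ‖b v s‖ ≤ K0*(‖v‖+‖y‖) + K0 + ‖b y 0‖ := by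
      nlinarith [mul_le_mul_of_nonneg_left h2 hK0, mul_le_mul_of_nonneg_left h3 hK0]
    rw [hβdef]
    nlinarith [h7, mul_nonneg hK0 h6, mul_nonneg (norm_nonneg (b y 0)) h6,
      mul_nonneg (mul_nonneg hK0 (norm_nonneg y)) h6, norm_nonneg y]
  have hσB : ∀ (v : Fin d → ℝ) (s : ℝ), 0 ≤ s → s ≤ 1 → ‖σ v s‖ ≤ s2 * (1 + ‖v‖) := by
    intro v s hs0 hs1
    have h1 := hσ v y s 0
    have h2 : |s - 0| ^ ((1:ℝ)/2) ≤ 1 := by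
      rw [sub_zero, abs_of_nonneg hs0]
      exact Real.rpow_le_one hs0 hs1 (by norm_num)
    have h5 : (0:ℝ) ≤ |s - 0| ^ ((1:ℝ)/2) := Real.rpow_nonneg (abs_nonneg _) _
    have h3 : ‖v - y‖ ≤ ‖v‖ + ‖y‖ := norm_sub_le v y
    have h4 : ‖σ v s‖ ≤ ‖σ v s - σ y 0‖ + ‖σ y 0‖ := by
      simpa using norm_add_le (σ v s - σ y 0) (σ y 0)
    have h6 : 0 ≤ ‖v‖ := norm_nonneg v
    have h7 : ‖σ v s‖ ≤ K0*(‖v‖+‖y‖) + K0 + ‖σ y 0‖ := by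
      nlinarith [mul_le_mul_of_nonneg_left h2 hK0, mul_le_mul_of_nonneg_left h3 hK0]
    rw [hs2def]
    nlinarith [h7, mul_nonneg hK0 h6, mul_nonneg (norm_nonneg (σ y 0)) h6,
      mul_nonneg (mul_nonneg hK0 (norm_nonneg y)) h6, norm_nonneg y]
  refine ⟨K, ?_⟩
  intro h hh t ht
  obtain ⟨N, hN⟩ := hterm h hh
  have hm : ∀ n, F h n ≤ mΩ := (hfilt h hh).2
  have hmono : Monotone (F h) := (hfilt h hh).1
  have hYm : ∀ n, Measurable[F h n] (Y h n) := hadapt h hh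
  have hY2 : ∀ n, MemLp (Y h n) 2 P := hL2 h hh
  have hh0 : 0 < h := hh.1
  have hh1 : h ≤ 1 := hh.2
  have hcpos : 0 < h / C := div_pos hh0 hC0
  have ht0 : 0 ≤ t := ht.1
  have ht1 : t ≤ 1 := ht.2
  have hstepsAll : ∀ᵐ ω ∂P, ∀ i, h / C ≤ Δt h i ω ∧ Δt h i ω ≤ C * h :=
    ae_all_iff.mpr (hstep h hh)
  have hgood : ∀ᵐ ω ∂P,
      (∀ i, h / C ≤ Δt h i ω ∧ Δt h i ω ≤ C * h) ∧ gridTime (Δt h) N ω = 1 :=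
    hstepsAll.and hN
  -- the events A n and the quantities Q n
  set A : ℕ → Set Ω := fun n => {ω | gridTime (Δt h) (n+1) ω ≤ t} with hAdef
  have hAm : ∀ n, MeasurableSet[F h n] (A n) := by
    intro n
    have hgm : Measurable[F h n] fun ω => gridTime (Δt h) (n+1) ω := by
      apply Finset.measurable_sum
      intro i hi
      have hi' : i ≤ n := Nat.lt_succ_iff.mp (Finset.mem_range.mp hi)
      exact (hstepmeas h hh i).mono (hmono hi') le_rfl
    exact measurableSet_le hgm measurable_const
  set Q : ℕ → Ω → ℝ := fun n ω => ∑ k, (Y h n ω k)^2 with hQdef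
  have hQint : ∀ n, Integrable (Q n) P := fun n =>
    integrable_finset_sum _ fun k _ => (SMAux.memℒp_pi_apply (hY2 n) k).integrable_sq
  have hQ0 : ∀ n ω, 0 ≤ Q n ω := fun n ω => Finset.sum_nonneg fun k _ => sq_nonneg _
  -- the one-step inequality
  have hstepIneq : ∀ n, ∫ ω in A n, Q (n+1) ω ∂P
      ≤ (1 + c5*h) * ∫ ω in A n, Q n ω ∂P + c5*h := by
    intro n
    have hmn : F h n ≤ mΩ := hm n
    have hD2 : MemLp (fun ω => Y h (n+1) ω - Y h n ω) 2 P := (hY2 (n+1)).sub (hY2 n)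
    have hDint : Integrable (fun ω => Y h (n+1) ω - Y h n ω) P := hD2.integrable one_le_two
    have hDk2 : ∀ k : Fin d, MemLp (fun ω => Y h (n+1) ω k - Y h n ω k) 2 P := fun k => by
      have := SMAux.memℒp_pi_apply hD2 k; simpa [Pi.sub_apply] using this
    have hMk2 : ∀ k : Fin d,
        MemLp (fun ω => (P[(fun ω' => Y h (n+1) ω' - Y h n ω') | F h n]) ω k) 2 P := fun k =>
      (SMAux.memℒp_two_condexp hmn (hDk2 k)).ae_eq
        (SMAux.condexp_pi_apply hmn hDint k).symm
    have hXM2 : ∀ k : Fin d,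
        MemLp (fun ω => Y h n ω k + (P[(fun ω' => Y h (n+1) ω' - Y h n ω') | F h n]) ω k) 2 P :=
      fun k => (SMAux.memℒp_pi_apply (hY2 n) k).add (hMk2 k)
    have hid : ∀ k : Fin d, ∫ ω in A n, (Y h (n+1) ω k)^2 ∂P
        = ∫ ω in A n, (Y h n ω k + (P[(fun ω' => Y h (n+1) ω' - Y h n ω') | F h n]) ω k)^2 ∂P
          + ∫ ω in A n, (P[(fun ω' =>
              (Y h (n+1) ω' k - Y h n ω' k
                - (P[(fun ω'' => Y h (n+1) ω'' - Y h n ω'') | F h n]) ω' k) *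
              (Y h (n+1) ω' k - Y h n ω' k
                - (P[(fun ω'' => Y h (n+1) ω'' - Y h n ω'') | F h n]) ω' k)) | F h n]) ω ∂P :=
      fun k => SMAux.step_identity hmn (hY2 n) (hY2 (n+1))
        ((hYm n).stronglyMeasurable) (hAm n) k
    have hIsq : IntegrableOn (fun ω => ∑ k,
        (Y h n ω k + (P[(fun ω' => Y h (n+1) ω' - Y h n ω') | F h n]) ω k)^2) (A n) P :=
      (integrable_finset_sum _ fun k _ => (hXM2 k).integrable_sq).integrableOn
    have hIV : IntegrableOn (fun ω => ∑ k : Fin d, (P[(fun ω' =>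
              (Y h (n+1) ω' k - Y h n ω' k
                - (P[(fun ω'' => Y h (n+1) ω'' - Y h n ω'') | F h n]) ω' k) *
              (Y h (n+1) ω' k - Y h n ω' k
                - (P[(fun ω'' => Y h (n+1) ω'' - Y h n ω'') | F h n]) ω' k)) | F h n]) ω)
        (A n) P :=
      (integrable_finset_sum _ fun k _ => integrable_condExp).integrableOn
    have hsum1 : ∫ ω in A n, Q (n+1) ω ∂P = ∑ k, ∫ ω in A n, (Y h (n+1) ω k)^2 ∂P := by
      simp only [hQdef]
      exact integral_finset_sum _ fun k _ =>
        ((SMAux.memℒp_pi_apply (hY2 (n+1)) k).integrable_sq).integrableOn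
    have htot : ∫ ω in A n, Q (n+1) ω ∂P = ∫ ω in A n, (∑ k,
        (Y h n ω k + (P[(fun ω' => Y h (n+1) ω' - Y h n ω') | F h n]) ω k)^2
        + ∑ k : Fin d, (P[(fun ω' =>
              (Y h (n+1) ω' k - Y h n ω' k
                - (P[(fun ω'' => Y h (n+1) ω'' - Y h n ω'') | F h n]) ω' k) *
              (Y h (n+1) ω' k - Y h n ω' k
                - (P[(fun ω'' => Y h (n+1) ω'' - Y h n ω'') | F h n]) ω' k)) | F h n]) ω) ∂P := by
      rw [hsum1, Finset.sum_congr rfl fun k _ => hid k, Finset.sum_add_distrib,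
        ← integral_finset_sum _ fun k _ => ((hXM2 k).integrable_sq).integrableOn,
        ← integral_finset_sum _ fun k _ => integrable_condExp.integrableOn,
        ← integral_add hIsq hIV]
    have hbound : ∀ᵐ ω ∂(P.restrict (A n)), (∑ k,
        (Y h n ω k + (P[(fun ω' => Y h (n+1) ω' - Y h n ω') | F h n]) ω k)^2
        + ∑ k : Fin d, (P[(fun ω' =>
              (Y h (n+1) ω' k - Y h n ω' k
                - (P[(fun ω'' => Y h (n+1) ω'' - Y h n ω'') | F h n]) ω' k) *
              (Y h (n+1) ω' k - Y h n ω' k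
                - (P[(fun ω'' => Y h (n+1) ω'' - Y h n ω'') | F h n]) ω' k)) | F h n]) ω)
        ≤ (1 + c5*h) * Q n ω + c5*h := by
      rw [ae_restrict_iff' (hmn _ (hAm n))]
      filter_upwards [hstepsAll, hdrift h hh n,
        ae_all_iff.mpr fun k : Fin d => hcov h hh n k k] with ω hsΩ hdr hcv hmemA
      have hE0 : 0 ≤ ‖Y h n ω‖ := norm_nonneg _
      have hΔ0 : 0 ≤ Δt h n ω := hcpos.le.trans (hsΩ n).1
      have hΔC : Δt h n ω ≤ C * h := (hsΩ n).2
      have htn0 : 0 ≤ gridTime (Δt h) n ω :=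
        SMAux.gridTime_nonneg (fun i => hcpos.le.trans (hsΩ i).1) n
      have htn1 : gridTime (Δt h) n ω ≤ 1 := by
        have hsucc := SMAux.gridTime_succ (Δt h) n ω
        have hA' : gridTime (Δt h) (n+1) ω ≤ t := hmemA
        linarith
      -- bound on each component of the conditional mean
      have hMk : ∀ k : Fin d,
          |(P[(fun ω' => Y h (n+1) ω' - Y h n ω') | F h n]) ω k| ≤ γ*h*(1 + ‖Y h n ω‖) := by
        intro k
        have h1 : |(P[(fun ω' => Y h (n+1) ω' - Y h n ω') | F h n]) ω k|
            ≤ ‖(P[(fun ω' => Y h (n+1) ω' - Y h n ω') | F h n]) ω‖ := by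
          simpa [Real.norm_eq_abs] using
            norm_le_pi_norm ((P[(fun ω' => Y h (n+1) ω' - Y h n ω') | F h n]) ω) k
        have h2 : ‖(P[(fun ω' => Y h (n+1) ω' - Y h n ω') | F h n]) ω‖
            ≤ ‖(P[(fun ω' => Y h (n+1) ω' - Y h n ω') | F h n]) ω
                - Δt h n ω • b (Y h n ω) (gridTime (Δt h) n ω)‖
              + ‖Δt h n ω • b (Y h n ω) (gridTime (Δt h) n ω)‖ := by
          simpa using norm_add_le
            ((P[(fun ω' => Y h (n+1) ω' - Y h n ω') | F h n]) ω
              - Δt h n ω • b (Y h n ω) (gridTime (Δt h) n ω))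
            (Δt h n ω • b (Y h n ω) (gridTime (Δt h) n ω))
        have h3 : ‖Δt h n ω • b (Y h n ω) (gridTime (Δt h) n ω)‖
            = Δt h n ω * ‖b (Y h n ω) (gridTime (Δt h) n ω)‖ := by
          rw [norm_smul, Real.norm_eq_abs, abs_of_nonneg hΔ0]
        have h4 : ‖b (Y h n ω) (gridTime (Δt h) n ω)‖ ≤ β * (1 + ‖Y h n ω‖) :=
          hbB _ _ htn0 htn1
        have hmul1 : Δt h n ω * ‖b (Y h n ω) (gridTime (Δt h) n ω)‖
            ≤ (C*h) * (β*(1 + ‖Y h n ω‖)) :=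
          mul_le_mul hΔC h4 (norm_nonneg _) (by positivity)
        have hmul2 : C*h*(Δt h n ω) ≤ C*h*(C*h) :=
          mul_le_mul_of_nonneg_left hΔC (by positivity)
        have hh2 : C*h*(C*h) ≤ C*C*h := by nlinarith
        have hCE : C*C*h ≤ C*C*h*(1 + ‖Y h n ω‖) := by nlinarith
        simp only [hγdef]
        nlinarith [hdr, h1, h2]
      -- bound on the conditional variance terms
      have hVb : ∀ k : Fin d, (P[(fun ω' =>
              (Y h (n+1) ω' k - Y h n ω' k
                - (P[(fun ω'' => Y h (n+1) ω'' - Y h n ω'') | F h n]) ω' k) *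
              (Y h (n+1) ω' k - Y h n ω' k
                - (P[(fun ω'' => Y h (n+1) ω'' - Y h n ω'') | F h n]) ω' k)) | F h n]) ω
          ≤ C*h*((d1:ℝ)*(s2*(1 + ‖Y h n ω‖))^2) + C*C*h := by
        intro k
        have h1 := hcv k
        have hσe : ∀ j, |σ (Y h n ω) (gridTime (Δt h) n ω) k j| ≤ s2*(1 + ‖Y h n ω‖) := by
          intro j
          have e1 : |σ (Y h n ω) (gridTime (Δt h) n ω) k j|
              ≤ ‖σ (Y h n ω) (gridTime (Δt h) n ω) k‖ := by
            simpa [Real.norm_eq_abs] using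
              norm_le_pi_norm (σ (Y h n ω) (gridTime (Δt h) n ω) k) j
          have e2 : ‖σ (Y h n ω) (gridTime (Δt h) n ω) k‖
              ≤ ‖σ (Y h n ω) (gridTime (Δt h) n ω)‖ :=
            norm_le_pi_norm (σ (Y h n ω) (gridTime (Δt h) n ω)) k
          exact e1.trans (e2.trans (hσB _ _ htn0 htn1))
        have hsum : ∑ j, σ (Y h n ω) (gridTime (Δt h) n ω) k j
              * σ (Y h n ω) (gridTime (Δt h) n ω) k j
            ≤ (d1:ℝ)*(s2*(1 + ‖Y h n ω‖))^2 := by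
          calc ∑ j, σ (Y h n ω) (gridTime (Δt h) n ω) k j
                * σ (Y h n ω) (gridTime (Δt h) n ω) k j
              ≤ ∑ _j : Fin d1, (s2*(1 + ‖Y h n ω‖))^2 := by
                refine Finset.sum_le_sum fun j _ => ?_
                have := hσe j
                nlinarith [abs_nonneg (σ (Y h n ω) (gridTime (Δt h) n ω) k j),
                  sq_abs (σ (Y h n ω) (gridTime (Δt h) n ω) k j)]
            _ = (d1:ℝ)*(s2*(1 + ‖Y h n ω‖))^2 := by
                rw [Finset.sum_const, Finset.card_univ, Fintype.card_fin, nsmul_eq_mul]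
        have hsum0 : 0 ≤ ∑ j, σ (Y h n ω) (gridTime (Δt h) n ω) k j
              * σ (Y h n ω) (gridTime (Δt h) n ω) k j :=
          Finset.sum_nonneg fun j _ => mul_self_nonneg _
        have habs := abs_le.mp h1
        have hmul1 : Δt h n ω * (∑ j, σ (Y h n ω) (gridTime (Δt h) n ω) k j
              * σ (Y h n ω) (gridTime (Δt h) n ω) k j)
            ≤ (C*h) * ((d1:ℝ)*(s2*(1 + ‖Y h n ω‖))^2) :=
          mul_le_mul hΔC hsum hsum0 (by positivity)
        have hmul2 : C*h*(Δt h n ω) ≤ C*h*(C*h) :=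
          mul_le_mul_of_nonneg_left hΔC (by positivity)
        have hh2 : C*h*(C*h) ≤ C*C*h := by nlinarith
        linarith [habs.2]
      -- assemble the pointwise bound
      have hE2 : ‖Y h n ω‖^2 ≤ Q n ω := by
        simpa [hQdef] using SMAux.sq_norm_le_sum_sq (Y h n ω)
      have hXk : ∀ k, |Y h n ω k| ≤ ‖Y h n ω‖ := fun k => by
        simpa [Real.norm_eq_abs] using norm_le_pi_norm (Y h n ω) k
      have hQn0 : 0 ≤ Q n ω := hQ0 n ω
      have hEE : (1 + ‖Y h n ω‖)^2 ≤ 2*(1 + Q n ω) := by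
        nlinarith [sq_nonneg (1 - ‖Y h n ω‖)]
      have hS1 : ∑ k, (Y h n ω k + (P[(fun ω' => Y h (n+1) ω' - Y h n ω') | F h n]) ω k)^2
          ≤ Q n ω + (d:ℝ)*(2*‖Y h n ω‖*(γ*h*(1 + ‖Y h n ω‖)))
            + (d:ℝ)*(γ*h*(1 + ‖Y h n ω‖))^2 := by
        have per : ∀ k, (Y h n ω k + (P[(fun ω' => Y h (n+1) ω' - Y h n ω') | F h n]) ω k)^2
            ≤ (Y h n ω k)^2 + 2*‖Y h n ω‖*(γ*h*(1 + ‖Y h n ω‖))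
              + (γ*h*(1 + ‖Y h n ω‖))^2 := by
          intro k
          have t1 : Y h n ω k * (P[(fun ω' => Y h (n+1) ω' - Y h n ω') | F h n]) ω k
              ≤ |Y h n ω k| * |(P[(fun ω' => Y h (n+1) ω' - Y h n ω') | F h n]) ω k| := by
            rw [← abs_mul]; exact le_abs_self _
          have t2 : |Y h n ω k| * |(P[(fun ω' => Y h (n+1) ω' - Y h n ω') | F h n]) ω k|
              ≤ ‖Y h n ω‖ * (γ*h*(1 + ‖Y h n ω‖)) :=
            mul_le_mul (hXk k) (hMk k) (abs_nonneg _) hE0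
          have t3 : ((P[(fun ω' => Y h (n+1) ω' - Y h n ω') | F h n]) ω k)^2
              ≤ (γ*h*(1 + ‖Y h n ω‖))^2 := by
            rw [← sq_abs]
            exact pow_le_pow_left₀ (abs_nonneg _) (hMk k) 2
          nlinarith [t1, t2, t3]
        calc ∑ k, (Y h n ω k + (P[(fun ω' => Y h (n+1) ω' - Y h n ω') | F h n]) ω k)^2
            ≤ ∑ k, ((Y h n ω k)^2 + 2*‖Y h n ω‖*(γ*h*(1 + ‖Y h n ω‖))
              + (γ*h*(1 + ‖Y h n ω‖))^2) := Finset.sum_le_sum fun k _ => per k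
          _ = Q n ω + (d:ℝ)*(2*‖Y h n ω‖*(γ*h*(1 + ‖Y h n ω‖)))
              + (d:ℝ)*(γ*h*(1 + ‖Y h n ω‖))^2 := by
            rw [Finset.sum_add_distrib, Finset.sum_add_distrib, Finset.sum_const,
              Finset.sum_const, Finset.card_univ, Fintype.card_fin, nsmul_eq_mul,
              nsmul_eq_mul, hQdef]
            try ring
      have hS2 : ∑ k : Fin d, (P[(fun ω' =>
              (Y h (n+1) ω' k - Y h n ω' k
                - (P[(fun ω'' => Y h (n+1) ω'' - Y h n ω'') | F h n]) ω' k) *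
              (Y h (n+1) ω' k - Y h n ω' k
                - (P[(fun ω'' => Y h (n+1) ω'' - Y h n ω'') | F h n]) ω' k)) | F h n]) ω
          ≤ (d:ℝ)*(C*h*((d1:ℝ)*(s2*(1 + ‖Y h n ω‖))^2) + C*C*h) := by
        calc ∑ k : Fin d, (P[(fun ω' =>
              (Y h (n+1) ω' k - Y h n ω' k
                - (P[(fun ω'' => Y h (n+1) ω'' - Y h n ω'') | F h n]) ω' k) *
              (Y h (n+1) ω' k - Y h n ω' k
                - (P[(fun ω'' => Y h (n+1) ω'' - Y h n ω'') | F h n]) ω' k)) | F h n]) ω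
            ≤ ∑ _k : Fin d, (C*h*((d1:ℝ)*(s2*(1 + ‖Y h n ω‖))^2) + C*C*h) :=
              Finset.sum_le_sum fun k _ => hVb k
          _ = (d:ℝ)*(C*h*((d1:ℝ)*(s2*(1 + ‖Y h n ω‖))^2) + C*C*h) := by
              rw [Finset.sum_const, Finset.card_univ, Fintype.card_fin, nsmul_eq_mul]
      -- final arithmetic
      have hd0 : (0:ℝ) ≤ (d:ℝ) := Nat.cast_nonneg d
      have hd10 : (0:ℝ) ≤ (d1:ℝ) := Nat.cast_nonneg d1
      have key1 : (d:ℝ)*(2*‖Y h n ω‖*(γ*h*(1 + ‖Y h n ω‖))) ≤ 4*(d:ℝ)*γ*h*(1 + Q n ω) := by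
        have e1 : ‖Y h n ω‖*(1 + ‖Y h n ω‖) ≤ (1 + ‖Y h n ω‖)^2 := by nlinarith
        nlinarith [mul_nonneg (mul_nonneg hd0 hγ0) hh0.le, hEE,
          mul_nonneg hγ0 hh0.le, mul_le_mul_of_nonneg_left hEE
            (mul_nonneg (mul_nonneg hd0 hγ0) hh0.le),
          mul_le_mul_of_nonneg_left e1 (mul_nonneg (mul_nonneg hd0 hγ0) hh0.le)]
      have key2 : (d:ℝ)*(γ*h*(1 + ‖Y h n ω‖))^2 ≤ 2*(d:ℝ)*γ^2*h*(1 + Q n ω) := by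
        have e2 : (d:ℝ)*γ^2*h^2 ≤ (d:ℝ)*γ^2*h := by
          have hsq : h^2 ≤ h := by nlinarith
          exact mul_le_mul_of_nonneg_left hsq (by positivity)
        have e3 := mul_le_mul e2 hEE (sq_nonneg (1 + ‖Y h n ω‖)) (by positivity)
        nlinarith [e3]
      have key3 : (d:ℝ)*(C*h*((d1:ℝ)*(s2*(1 + ‖Y h n ω‖))^2))
          ≤ 2*(d:ℝ)*(d1:ℝ)*C*s2^2*h*(1 + Q n ω) := by
        nlinarith [mul_le_mul_of_nonneg_left hEE
          (mul_nonneg (mul_nonneg (mul_nonneg (mul_nonneg hd0 hd10) hC0.le)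
            (mul_nonneg hs20 hs20)) hh0.le)]
      have key4 : (d:ℝ)*(C*C*h) ≤ (d:ℝ)*C^2*h*(1 + Q n ω) := by
        nlinarith [mul_nonneg (mul_nonneg hd0 (mul_nonneg hC0.le hC0.le)) hh0.le, hQn0]
      have hfinal : Q n ω + (d:ℝ)*(2*‖Y h n ω‖*(γ*h*(1 + ‖Y h n ω‖)))
            + (d:ℝ)*(γ*h*(1 + ‖Y h n ω‖))^2
            + (d:ℝ)*(C*h*((d1:ℝ)*(s2*(1 + ‖Y h n ω‖))^2) + C*C*h)
          ≤ (1 + c5*h) * Q n ω + c5*h := by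
        simp only [hc5def]
        nlinarith [key1, key2, key3, key4]
      linarith [hS1, hS2, hfinal]
    have hfin : ∫ ω in A n, ((1 + c5*h) * Q n ω + c5*h) ∂P
        = (1 + c5*h) * ∫ ω in A n, Q n ω ∂P + c5*h * (P (A n)).toReal := by
      have hi1 : IntegrableOn (fun ω => (1 + c5*h) * Q n ω) (A n) P :=
        ((hQint n).const_mul _).integrableOn
      rw [integral_add hi1 (integrableOn_const (measure_ne_top _ _)),
        integral_const_mul, setIntegral_const, measureReal_def, smul_eq_mul, mul_comm]
      ring
    have hPA : (P (A n)).toReal ≤ 1 := by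
      have h1 : P (A n) ≤ 1 := prob_le_one
      simpa using ENNReal.toReal_mono ENNReal.one_ne_top h1
    calc ∫ ω in A n, Q (n+1) ω ∂P
        = _ := htot
      _ ≤ ∫ ω in A n, ((1 + c5*h) * Q n ω + c5*h) ∂P := by
          refine setIntegral_mono_ae_restrict (hIsq.add hIV) ?_ hbound
          exact (((hQint n).const_mul _).add (integrable_const _)).integrableOn
      _ = (1 + c5*h) * ∫ ω in A n, Q n ω ∂P + c5*h * (P (A n)).toReal := hfin
      _ ≤ (1 + c5*h) * ∫ ω in A n, Q n ω ∂P + c5*h := by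
          have : c5*h * (P (A n)).toReal ≤ c5*h * 1 :=
            mul_le_mul_of_nonneg_left hPA (by positivity)
          linarith
  -- good-ω structural facts about zIdx
  have good_facts : ∀ ω, (∀ i, h / C ≤ Δt h i ω ∧ Δt h i ω ≤ C * h) →
      gridTime (Δt h) N ω = 1 →
      (∀ n, (n < zIdx (Δt h) t ω ↔ gridTime (Δt h) (n+1) ω ≤ t))
        ∧ zIdx (Δt h) t ω ≤ N := by
    intro ω hs hterm1
    have hΔc : ∀ i, h / C ≤ Δt h i ω := fun i => (hs i).1
    have hiff := fun n => SMAux.zIdx_lt_iff hcpos hΔc ht0 n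
    refine ⟨hiff, ?_⟩
    by_contra hgt
    push_neg at hgt
    have h1 : gridTime (Δt h) (N+1) ω ≤ t := (hiff N).mp hgt
    have h2 := SMAux.gridTime_succ (Δt h) N ω
    have h3 := hΔc N
    linarith
  -- the Gronwall recursion for the stopped second moments
  set g : ℕ → Ω → ℝ := fun n ω => ∑ k, (Y h (min (zIdx (Δt h) t ω) n) ω k)^2 with hgdef
  have hg0 : ∀ n ω, 0 ≤ g n ω := fun n ω => Finset.sum_nonneg fun k _ => sq_nonneg _
  have hrec : ∀ n, Integrable (g n) P ∧
      ∫ ω, g n ω ∂P + 1 ≤ (∑ k, (y k)^2 + 1) * (1 + c5*h)^n := by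
    intro n
    induction n with
    | zero =>
      have hgz : g 0 = fun _ => ∑ k, (y k)^2 := by
        funext ω
        simp [hgdef, Nat.min_zero, hY0 h hh ω]
      rw [hgz]
      refine ⟨integrable_const _, ?_⟩
      rw [integral_const]
      simp
    | succ n ih =>
      have hAms : MeasurableSet (A n) := hm n _ (hAm n)
      have hsplit : g (n+1) =ᵐ[P]
          fun ω => (A n).indicator (Q (n+1)) ω + ((A n)ᶜ).indicator (g n) ω := by
        filter_upwards [hgood] with ω hgw
        obtain ⟨hiff, hzN⟩ := good_facts ω hgw.1 hgw.2
        by_cases hA' : ω ∈ A n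
        · have hz : n < zIdx (Δt h) t ω := (hiff n).mpr hA'
          have hminz : min (zIdx (Δt h) t ω) (n+1) = n+1 := min_eq_right (Nat.succ_le_of_lt hz)
          have hnc : ω ∉ (A n)ᶜ := fun hc => hc hA'
          simp [hgdef, hQdef, hminz, Set.indicator_of_mem hA', Set.indicator_of_notMem hnc]
        · have hz : zIdx (Δt h) t ω ≤ n := by
            by_contra hc
            exact hA' ((hiff n).mp (not_le.mp hc))
          have hminz : min (zIdx (Δt h) t ω) (n+1) = min (zIdx (Δt h) t ω) n := by omega
          simp [hgdef, hminz, Set.indicator_of_notMem hA',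
            Set.indicator_of_mem (Set.mem_compl hA')]
      have hRHSint : Integrable
          (fun ω => (A n).indicator (Q (n+1)) ω + ((A n)ᶜ).indicator (g n) ω) P :=
        ((hQint (n+1)).indicator hAms).add (ih.1.indicator hAms.compl)
      have hint : Integrable (g (n+1)) P := hRHSint.congr hsplit.symm
      refine ⟨hint, ?_⟩
      have h1 : ∫ ω, g (n+1) ω ∂P
          = ∫ ω in A n, Q (n+1) ω ∂P + ∫ ω in (A n)ᶜ, g n ω ∂P := by
        rw [integral_congr_ae hsplit,
          integral_add ((hQint (n+1)).indicator hAms) (ih.1.indicator hAms.compl),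
          integral_indicator hAms, integral_indicator hAms.compl]
      have h2 : ∫ ω in A n, Q n ω ∂P = ∫ ω in A n, g n ω ∂P := by
        refine setIntegral_congr_ae hAms ?_
        filter_upwards [hgood] with ω hgw hmemA
        obtain ⟨hiff, _⟩ := good_facts ω hgw.1 hgw.2
        have hz : n < zIdx (Δt h) t ω := (hiff n).mpr hmemA
        have hminz : min (zIdx (Δt h) t ω) n = n := min_eq_right hz.le
        simp [hgdef, hQdef, hminz]
      have h3 : ∫ ω in A n, g n ω ∂P + ∫ ω in (A n)ᶜ, g n ω ∂P = ∫ ω, g n ω ∂P :=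
        integral_add_compl hAms ih.1
      have h4 : 0 ≤ ∫ ω in (A n)ᶜ, g n ω ∂P :=
        setIntegral_nonneg hAms.compl fun ω _ => hg0 n ω
      have h6 := hstepIneq n
      rw [h2] at h6
      have hch : 0 ≤ c5 * h := by positivity
      have h7 : ∫ ω, g (n+1) ω ∂P + 1 ≤ (1 + c5*h) * (∫ ω, g n ω ∂P + 1) := by
        rw [h1, ← h3]
        nlinarith [h4, h6]
      have h8 : (1 + c5*h) * (∫ ω, g n ω ∂P + 1)
          ≤ (1 + c5*h) * ((∑ k, (y k)^2 + 1) * (1 + c5*h)^n) :=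
        mul_le_mul_of_nonneg_left ih.2 (by positivity)
      calc ∫ ω, g (n+1) ω ∂P + 1 ≤ (1 + c5*h) * (∫ ω, g n ω ∂P + 1) := h7
        _ ≤ (1 + c5*h) * ((∑ k, (y k)^2 + 1) * (1 + c5*h)^n) := h8
        _ = (∑ k, (y k)^2 + 1) * (1 + c5*h)^(n+1) := by ring
  -- N h ≤ C from one good sample point
  have hNh : (N:ℝ) * h ≤ C := by
    have hPne : P ≠ 0 := by
      intro h0
      have := measure_univ (μ := P)
      rw [h0] at this
      simp at this
    haveI : (MeasureTheory.ae P).NeBot := ae_neBot.mpr hPne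
    obtain ⟨ω₀, hω₀⟩ := hgood.exists
    have h1 : (N:ℝ) * (h/C) ≤ gridTime (Δt h) N ω₀ :=
      SMAux.gridTime_lower (fun i => (hω₀.1 i).1) N
    rw [hω₀.2] at h1
    have h2 : (N:ℝ) * (h/C) ≤ 1 := h1
    calc (N:ℝ) * h = ((N:ℝ) * (h/C)) * C := by field_simp
      _ ≤ 1 * C := mul_le_mul_of_nonneg_right h2 hC0.le
      _ = C := one_mul C
  have hpow : (1 + c5*h)^N ≤ Real.exp (c5*C) := by
    have h1 : 1 + c5*h ≤ Real.exp (c5*h) := by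
      have := Real.add_one_le_exp (c5*h)
      linarith
    calc (1 + c5*h)^N ≤ (Real.exp (c5*h))^N := pow_le_pow_left₀ (by positivity) h1 N
      _ = Real.exp ((N:ℝ)*(c5*h)) := by rw [← Real.exp_nat_mul]
      _ ≤ Real.exp (c5*C) := by
          apply Real.exp_le_exp.mpr
          nlinarith [hNh, hc50, hh0.le]
  have hKbound : ∫ ω, g N ω ∂P ≤ K := by
    have := (hrec N).2
    have h1 : (∑ k, (y k)^2 + 1) * (1 + c5*h)^N ≤ (∑ k, (y k)^2 + 1) * Real.exp (c5*C) :=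
      mul_le_mul_of_nonneg_left hpow (by positivity)
    simp only [hKdef]
    nlinarith [Real.exp_pos (c5*C)]
  have hzleN_ae : ∀ᵐ ω ∂P, ‖Y h (zIdx (Δt h) t ω) ω‖^2 ≤ g N ω := by
    filter_upwards [hgood] with ω hgw
    obtain ⟨_, hzN⟩ := good_facts ω hgw.1 hgw.2
    have hmin : min (zIdx (Δt h) t ω) N = zIdx (Δt h) t ω := min_eq_left hzN
    calc ‖Y h (zIdx (Δt h) t ω) ω‖^2
        ≤ ∑ k, (Y h (zIdx (Δt h) t ω) ω k)^2 := SMAux.sq_norm_le_sum_sq _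
      _ = g N ω := by rw [hgdef]; simp only [hmin]
  by_cases hI : Integrable (fun ω => ‖Y h (zIdx (Δt h) t ω) ω‖^2) P
  · exact le_trans (integral_mono_ae hI (hrec N).1 hzleN_ae) hKbound
  · rw [integral_undef hI]
    exact hKpos
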